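/- The clobber position ooxo is equivalent to the sum of the clobber positions xxo and ox. -/

import Mathlib

namespace SetTheory

universe u

/-- Pre-games, as in Mathlib (Dec 2024), which no longer contains combinatorial game theory. -/
inductive PGame : Type (u + 1)
  | mk : ∀ α β : Type u, (α → PGame) → (β → PGame) → PGame

namespace PGame

def ofLists (L R : List PGame.{u}) : PGame.{u} :=
  mk (ULift (Fin L.length)) (ULift (Fin R.length)) (fun i => L.get i.down) fun j => R.get j.down

instance : Zero PGame.{u} := ⟨⟨PEmpty, PEmpty, PEmpty.elim, PEmpty.elim⟩⟩

/-- Simultaneously `(x ≤ y, x ⧏ y)`, by the usual mutual recursion. -/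
noncomputable def leLf (x : PGame.{u}) : PGame.{u} → Prop × Prop :=
  PGame.rec (motive := fun _ => PGame.{u} → Prop × Prop)
    (fun _ _ _ _ IHL IHR y =>
      PGame.rec (motive := fun _ => Prop × Prop)
        (fun yl yr yL yR JL JR =>
          ((∀ i, (IHL i (mk yl yr yL yR)).2) ∧ ∀ j, (JR j).2,
           (∃ i, (JL i).1) ∨ ∃ j, (IHR j (mk yl yr yL yR)).1)) y) x

noncomputable instance : LE PGame.{u} := ⟨fun x y => (leLf x y).1⟩

/-- Equivalence of pre-games: `x ≤ y ∧ y ≤ x`. -/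
instance : HasEquiv PGame.{u} := ⟨fun x y => x ≤ y ∧ y ≤ x⟩

/-- Disjunctive sum. -/
noncomputable def add (x : PGame.{u}) : PGame.{u} → PGame.{u} :=
  PGame.rec (motive := fun _ => PGame.{u} → PGame.{u})
    (fun xl xr _ _ IHL IHR y =>
      PGame.rec (motive := fun _ => PGame.{u})
        (fun yl yr yL yR JL JR =>
          mk (xl ⊕ yl) (xr ⊕ yr)
            (Sum.rec (fun i => IHL i (mk yl yr yL yR)) JL)
            (Sum.rec (fun j => IHR j (mk yl yr yL yR)) JR)) y) x

noncomputable instance : Add PGame.{u} := ⟨add⟩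

end PGame

end SetTheory

open SetTheory PGame

inductive Cell | x | o | e
deriving DecidableEq

abbrev Pos := List Cell

/-- All positions reachable by one move of the player with stones `me`
clobbering an adjacent stone of the opponent `opp`. -/
def movesAux (me opp : Cell) : Pos → List Pos
  | a :: b :: rest =>
      (if a = me ∧ b = opp then [Cell.e :: me :: rest] else []) ++
      (if a = opp ∧ b = me then [me :: Cell.e :: rest] else []) ++
      (movesAux me opp (b :: rest)).map (a :: ·)
  | _ => []

def leftMoves (p : Pos) : List Pos := movesAux Cell.x Cell.o p
def rightMoves (p : Pos) : List Pos := movesAux Cell.o Cell.x p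

def stones (p : Pos) : Nat := p.countP (· != Cell.e)

/-- Game value of a clobber position, via fuel recursion (each move removes one stone). -/
def valueFuel : Nat → Pos → PGame
  | 0, _ => 0
  | n+1, p => PGame.ofLists ((leftMoves p).map (valueFuel n)) ((rightMoves p).map (valueFuel n))

def value (p : Pos) : PGame := valueFuel (stones p) p

namespace ClobberAux

open SetTheory.PGame

def lf (x y : PGame.{u}) : Prop := (leLf x y).2

lemma le_mk {xl xr : Type u} {xL : xl → PGame.{u}} {xR : xr → PGame.{u}}
    {yl yr : Type u} {yL : yl → PGame.{u}} {yR : yr → PGame.{u}} :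
    (mk xl xr xL xR ≤ mk yl yr yL yR) ↔
      (∀ i, lf (xL i) (mk yl yr yL yR)) ∧ ∀ j, lf (mk xl xr xL xR) (yR j) := Iff.rfl

lemma lf_mk {xl xr : Type u} {xL : xl → PGame.{u}} {xR : xr → PGame.{u}}
    {yl yr : Type u} {yL : yl → PGame.{u}} {yR : yr → PGame.{u}} :
    lf (mk xl xr xL xR) (mk yl yr yL yR) ↔
      (∃ i, mk xl xr xL xR ≤ yL i) ∨ ∃ j, xR j ≤ mk yl yr yL yR := Iff.rfl

lemma add_mk {xl xr : Type u} {xL : xl → PGame.{u}} {xR : xr → PGame.{u}}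
    {yl yr : Type u} {yL : yl → PGame.{u}} {yR : yr → PGame.{u}} :
    mk xl xr xL xR + mk yl yr yL yR =
      mk (xl ⊕ yl) (xr ⊕ yr)
        (Sum.elim (fun i => xL i + mk yl yr yL yR) (fun i => mk xl xr xL xR + yL i))
        (Sum.elim (fun j => xR j + mk yl yr yL yR) (fun j => mk xl xr xL xR + yR j)) := by
  congr 1 <;> funext k <;> cases k <;> rfl

lemma zero_def : (0 : PGame.{u}) = mk PEmpty PEmpty PEmpty.elim PEmpty.elim := rfl

lemma ofLists_def (L R : List PGame.{u}) :
    ofLists L R = mk (ULift (Fin L.length)) (ULift (Fin R.length))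
      (fun i => L.get i.down) fun j => R.get j.down := rfl

lemma equiv_def (x y : PGame.{u}) : (x ≈ y) ↔ (x ≤ y ∧ y ≤ x) := Iff.rfl

def z : PGame := ofLists [] []
def s : PGame := ofLists [z] [z]
def u : PGame := ofLists [z] [s]
def A : PGame := ofLists [s, z] [z, z]

set_option maxHeartbeats 1000000 in
lemma A_le_B : A ≤ u + s := by
  simp [A, u, s, z, ofLists_def, add_mk, le_mk, lf_mk, ULift.forall, ULift.exists,
    Fin.forall_fin_succ, Fin.exists_fin_succ, Sum.forall, Sum.exists]

set_option maxHeartbeats 1000000 in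
lemma B_le_A : u + s ≤ A := by
  simp [A, u, s, z, ofLists_def, add_mk, le_mk, lf_mk, ULift.forall, ULift.exists,
    Fin.forall_fin_succ, Fin.exists_fin_succ, Sum.forall, Sum.exists]

end ClobberAux

/-- The clobber position `ooxo` is equivalent to the sum `xxo + ox`. -/
theorem ooxo_equiv_xxo_add_ox :
    value [Cell.o, Cell.o, Cell.x, Cell.o] ≈
      value [Cell.x, Cell.x, Cell.o] + value [Cell.o, Cell.x] := by
  show ClobberAux.A ≈ ClobberAux.u + ClobberAux.s
  exact ⟨ClobberAux.A_le_B, ClobberAux.B_le_A⟩
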